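/- arXiv:0907.2515 — 6 statements merged into one kernel-verified Lean document; each statement's English description precedes it below -/
import Mathlib

section
/- Fix s ∈ ℂ with Re(s) > 1. Then the limit as m → ∞ of 𝒞(2m,1;s) = Σ'_{(p₁,p₂)} cos^{2m}(θ_{p₁,p₂})/(p₁²+p₂²)^s exists and equals 2ζ(2s): only the lattice points with |cos θ_{p₁,p₂}| = 1, i.e. the points (p₁,0) with p₁ ≠ 0, contribute in the limit. -/
/-- The angle `θ_{p₁,p₂} = arg(p₁ + i p₂)` of a lattice point. -/
noncomputable def latticeAngle (p : ℤ × ℤ) : ℝ :=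
  Complex.arg ((p.1 : ℂ) + (p.2 : ℂ) * Complex.I)

/-- The angular lattice sum `𝒞(n,m;s)`. -/
noncomputable def latC (n m : ℕ) (s : ℂ) : ℂ :=
  ∑' p : {p : ℤ × ℤ // p ≠ 0},
    ((Real.cos ((m : ℝ) * latticeAngle p.1) : ℂ)) ^ n /
      (((p.1.1 : ℂ)) ^ 2 + ((p.1.2 : ℂ)) ^ 2) ^ s

/-- The angular lattice sum `𝒮(n,m;s)`. -/
noncomputable def latS (n m : ℕ) (s : ℂ) : ℂ :=
  ∑' p : {p : ℤ × ℤ // p ≠ 0},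
    ((Real.sin ((m : ℝ) * latticeAngle p.1) : ℂ)) ^ n /
      (((p.1.1 : ℂ)) ^ 2 + ((p.1.2 : ℂ)) ^ 2) ^ s

open Filter Complex

private lemma lat_ne_zero {p : ℤ × ℤ} (hp : p ≠ 0) :
    ((p.1 : ℂ) + (p.2 : ℂ) * Complex.I) ≠ 0 := by
  intro h
  apply hp
  have h1 : ((p.1 : ℂ) + (p.2 : ℂ) * Complex.I).re = 0 := by rw [h]; simp
  have h2 : ((p.1 : ℂ) + (p.2 : ℂ) * Complex.I).im = 0 := by rw [h]; simp
  simp at h1 h2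
  exact Prod.ext (by exact_mod_cast h1) (by exact_mod_cast h2)

private lemma lat_r_pos {p : ℤ × ℤ} (hp : p ≠ 0) :
    (0:ℝ) < (p.1 : ℝ) ^ 2 + (p.2 : ℝ) ^ 2 := by
  have : p.1 ≠ 0 ∨ p.2 ≠ 0 := by
    by_contra hc
    push_neg at hc
    exact hp (Prod.ext hc.1 hc.2)
  rcases this with h | h
  · have : (0:ℝ) < (p.1 : ℝ) ^ 2 := by positivity
    nlinarith [sq_nonneg ((p.2:ℝ))]
  · have : (0:ℝ) < (p.2 : ℝ) ^ 2 := by positivity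
    nlinarith [sq_nonneg ((p.1:ℝ))]

/-- denominator as complex power of a positive real -/
private lemma lat_D_eq (p : ℤ × ℤ) :
    ((p.1 : ℂ)) ^ 2 + ((p.2 : ℂ)) ^ 2 = ((((p.1 : ℝ) ^ 2 + (p.2 : ℝ) ^ 2 : ℝ)) : ℂ) := by
  push_cast; ring

private lemma lat_cos_sq_lt_one {p : ℤ × ℤ} (hp : p ≠ 0) (h2 : p.2 ≠ 0) :
    (Real.cos (latticeAngle p)) ^ 2 < 1 := by
  have hz := lat_ne_zero hp
  have hsin : Real.sin (latticeAngle p) ≠ 0 := by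
    rw [latticeAngle, Complex.sin_arg]
    simp only [Complex.add_im, Complex.intCast_im, Complex.mul_im, Complex.intCast_re,
      Complex.I_im, Complex.I_re, mul_zero, Complex.intCast_im, mul_one, zero_add, zero_mul,
      add_zero]
    apply div_ne_zero
    · exact_mod_cast h2
    · simpa using hz
  nlinarith [Real.sin_sq_add_cos_sq (latticeAngle p), pow_pos (abs_pos.mpr hsin) 2, _root_.sq_abs (Real.sin (latticeAngle p))]

private lemma lat_cos_sq_eq_one {p : ℤ × ℤ} (hp : p ≠ 0) (h2 : p.2 = 0) :
    (Real.cos (latticeAngle p)) ^ 2 = 1 := by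
  have hz := lat_ne_zero hp
  have h1 : p.1 ≠ 0 := by
    intro h; exact hp (Prod.ext h h2)
  rw [latticeAngle, Complex.cos_arg hz]
  rw [h2]
  simp only [Int.cast_zero, Complex.ofReal_zero, zero_mul, add_zero]
  rw [Complex.norm_intCast]
  simp only [Complex.intCast_re]
  rw [div_pow, _root_.sq_abs, div_self]
  exact pow_ne_zero 2 (by exact_mod_cast h1 : ((p.1:ℝ)) ≠ 0)


private lemma lat_cpow_two_mul (s : ℂ) (n : ℕ) : ((n:ℂ)^2)^s = (n:ℂ)^(2*s) := by
  rw [show ((2:ℂ) * s) = ((2:ℕ):ℂ)*s by norm_num,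
    Complex.cpow_nat_mul' (x := (n:ℂ)) (n := 2) ?_ ?_ s]
  · rw [Complex.natCast_arg]
    simpa using Real.pi_pos
  · rw [Complex.natCast_arg]
    simpa using Real.pi_nonneg

private lemma lat_g_tsum (s : ℂ) (hs : 1 < s.re) :
    ∑' p : {p : ℤ × ℤ // p ≠ 0},
      (if p.1.2 = 0 then 1 / (((p.1.1 : ℂ)) ^ 2 + ((p.1.2 : ℂ)) ^ 2) ^ s else 0)
      = 2 * riemannZeta (2 * s) := by
  classical
  have h2s : 1 < (2 * s).re := by
    have h : (2 * s).re = 2 * s.re := by simp [Complex.mul_re]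
    rw [h]; linarith
  set F : ℤ → ℂ := fun n => if n = 0 then 0 else 1 / ((n:ℂ)^2) ^ s with hF
  have hF_ne : ∀ n : ℤ, n ≠ 0 → F n = 1 / ((n:ℂ)^2) ^ s := by
    intro n hn; simp [hF, hn]
  have hs1 : HasSum (fun n : ℕ => F (n:ℤ)) (riemannZeta (2*s)) := by
    have hsummable : Summable (fun n : ℕ => 1/(n:ℂ)^(2*s)) :=
      Complex.summable_one_div_nat_cpow.mpr h2s
    have heq : (fun n : ℕ => F (n:ℤ)) = fun n : ℕ => 1/(n:ℂ)^(2*s) := by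
      funext n
      rcases eq_or_ne n 0 with rfl | hn
      · simp [hF, Complex.zero_cpow (by intro h; rw [h] at h2s; simp at h2s; linarith : (2*s) ≠ 0)]
      · rw [hF]
        simp only [Int.cast_natCast, Nat.cast_eq_zero]
        rw [if_neg (by exact_mod_cast hn), lat_cpow_two_mul]
    rw [heq, zeta_eq_tsum_one_div_nat_cpow h2s]
    exact hsummable.hasSum
  have hs2 : HasSum (fun n : ℕ => F (-((n:ℤ)+1))) (riemannZeta (2*s)) := by
    have hsummable : Summable (fun n : ℕ => 1/((n:ℂ)+1)^(2*s)) := by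
      have h0 : Summable (fun n : ℕ => 1/(n:ℂ)^(2*s)) :=
        Complex.summable_one_div_nat_cpow.mpr h2s
      have := h0.comp_injective (add_left_injective 1)
      refine this.congr fun n => ?_
      simp [Function.comp]
    have heq : (fun n : ℕ => F (-((n:ℤ)+1))) = fun n : ℕ => 1/((n:ℂ)+1)^(2*s) := by
      funext n
      rw [hF_ne _ (by omega)]
      have h1 : ((-((n:ℤ)+1) : ℤ) : ℂ)^2 = (((n+1:ℕ):ℂ))^2 := by push_cast; ring
      rw [h1, lat_cpow_two_mul s (n+1)]
      push_cast
      ring_nf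
    rw [heq, zeta_eq_tsum_one_div_nat_add_one_cpow h2s]
    exact hsummable.hasSum
  have hFsum : HasSum F (riemannZeta (2*s) + riemannZeta (2*s)) :=
    HasSum.of_nat_of_neg_add_one hs1 hs2
  have htsum_F : ∑' n : ℤ, F n = 2 * riemannZeta (2*s) := by
    rw [hFsum.tsum_eq]; ring
  rw [← htsum_F]
  refine tsum_eq_tsum_of_ne_zero_bij
    (fun n : Function.support F => ⟨((n : ℤ), 0), ?_⟩) ?_ ?_ ?_
  · intro h
    apply n.2
    have : (n : ℤ) = 0 := by
      have := congrArg Prod.fst h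
      exact this
    simp [hF, this]
  · intro a b hab
    have : (a : ℤ) = (b : ℤ) := congrArg Prod.fst (Subtype.mk.injEq _ _ _ _ ▸ hab)
    exact Subtype.ext this
  · rintro p hp
    simp only [Function.mem_support] at hp
    have h2 : p.1.2 = 0 := by
      by_contra h
      rw [if_neg h] at hp
      exact hp rfl
    have h1 : p.1.1 ≠ 0 := by
      intro h; exact p.2 (Prod.ext h h2)
    refine ⟨⟨p.1.1, ?_⟩, ?_⟩
    · rw [Function.mem_support, hF_ne _ h1]
      apply one_div_ne_zero
      rw [Ne, Complex.cpow_eq_zero_iff, not_and_or]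
      left
      exact pow_ne_zero 2 (by exact_mod_cast h1)
    · apply Subtype.ext
      exact Prod.ext rfl h2.symm
  · rintro ⟨n, hn⟩
    rw [Function.mem_support] at hn
    have hn0 : n ≠ 0 := by
      intro h; apply hn; simp [hF, h]
    simp only [if_pos rfl]
    rw [hF_ne _ hn0]
    norm_num

/-- For fixed `s` with `Re s > 1`, `𝒞(2m,1;s) → 2 ζ(2s)` as `m → ∞`. -/
theorem latC_tendsto_two_zeta (s : ℂ) (hs : 1 < s.re) :
    Filter.Tendsto (fun m : ℕ => latC (2 * m) 1 s) Filter.atTop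
      (nhds (2 * riemannZeta (2 * s))) := by
  classical
  have hr : ∀ p : {p : ℤ × ℤ // p ≠ 0}, (0:ℝ) < (p.1.1 : ℝ) ^ 2 + (p.1.2 : ℝ) ^ 2 :=
    fun p => lat_r_pos p.2
  have habs : ∀ p : {p : ℤ × ℤ // p ≠ 0},
      ‖(((p.1.1 : ℂ)) ^ 2 + ((p.1.2 : ℂ)) ^ 2) ^ s‖
        = ((p.1.1 : ℝ) ^ 2 + (p.1.2 : ℝ) ^ 2) ^ s.re := by
    intro p
    rw [lat_D_eq p.1, Complex.norm_cpow_eq_rpow_re_of_pos (hr p)]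
  -- the injection into `Fin 2 → ℤ`
  have hv_inj : Function.Injective
      (fun p : {p : ℤ × ℤ // p ≠ 0} => (![p.1.1, p.1.2] : Fin 2 → ℤ)) := by
    intro a b hab
    have h0 := congrFun hab 0
    have h1 := congrFun hab 1
    simp only [Matrix.cons_val_zero, Matrix.cons_val_one, Matrix.head_cons] at h0 h1
    exact Subtype.ext (Prod.ext h0 h1)
  have hB_sum : Summable
      (fun p : {p : ℤ × ℤ // p ≠ 0} => ‖(![p.1.1, p.1.2] : Fin 2 → ℤ)‖ ^ (-(2 * s.re))) :=
    (EisensteinSeries.summable_one_div_norm_rpow (by linarith : (2:ℝ) < 2 * s.re)).comp_injective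
      hv_inj
  have hv_one : ∀ p : {p : ℤ × ℤ // p ≠ 0}, 1 ≤ ‖(![p.1.1, p.1.2] : Fin 2 → ℤ)‖ := by
    intro p
    rw [EisensteinSeries.norm_eq_max_natAbs]
    have : p.1.1 ≠ 0 ∨ p.1.2 ≠ 0 := by
      by_contra hc
      push_neg at hc
      exact p.2 (Prod.ext hc.1 hc.2)
    simp only [Matrix.cons_val_zero, Matrix.cons_val_one, Matrix.head_cons]
    rcases this with h | h
    · calc (1:ℝ) ≤ (p.1.1.natAbs : ℝ) := by exact_mod_cast Int.natAbs_pos.mpr h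
        _ ≤ _ := by
          rw [Nat.cast_max]
          exact le_max_left _ _
    · calc (1:ℝ) ≤ (p.1.2.natAbs : ℝ) := by exact_mod_cast Int.natAbs_pos.mpr h
        _ ≤ _ := by
          rw [Nat.cast_max]
          exact le_max_right _ _
  have hv_sq : ∀ p : {p : ℤ × ℤ // p ≠ 0},
      ‖(![p.1.1, p.1.2] : Fin 2 → ℤ)‖ ^ ((2:ℕ):ℝ) ≤ (p.1.1 : ℝ) ^ 2 + (p.1.2 : ℝ) ^ 2 := by
    intro p
    rw [Real.rpow_natCast, EisensteinSeries.norm_eq_max_natAbs]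
    simp only [Matrix.cons_val_zero, Matrix.cons_val_one, Matrix.head_cons]
    rw [Nat.cast_max]
    have ha : ((p.1.1.natAbs : ℝ)) ^ 2 = (p.1.1 : ℝ) ^ 2 := by
      rw [Nat.cast_natAbs, Int.cast_abs, _root_.sq_abs]
    have hb : ((p.1.2.natAbs : ℝ)) ^ 2 = (p.1.2 : ℝ) ^ 2 := by
      rw [Nat.cast_natAbs, Int.cast_abs, _root_.sq_abs]
    rcases max_cases ((p.1.1.natAbs : ℝ)) ((p.1.2.natAbs : ℝ)) with ⟨hm, _⟩ | ⟨hm, _⟩ <;>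
      rw [hm] <;> nlinarith [sq_nonneg ((p.1.1:ℝ)), sq_nonneg ((p.1.2:ℝ))]
  have hbound : ∀ (m : ℕ) (p : {p : ℤ × ℤ // p ≠ 0}),
      ‖((Real.cos (latticeAngle p.1) : ℂ)) ^ (2 * m) /
        (((p.1.1 : ℂ)) ^ 2 + ((p.1.2 : ℂ)) ^ 2) ^ s‖
      ≤ ‖(![p.1.1, p.1.2] : Fin 2 → ℤ)‖ ^ (-(2 * s.re)) := by
    intro m p
    have hr0 := hr p
    have hvp : (0:ℝ) < ‖(![p.1.1, p.1.2] : Fin 2 → ℤ)‖ := zero_lt_one.trans_le (hv_one p)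
    rw [norm_div, norm_pow, Complex.norm_real, Real.norm_eq_abs,
      habs p]
    have h1 : |Real.cos (latticeAngle p.1)| ^ (2*m) ≤ 1 :=
      pow_le_one₀ (abs_nonneg _) (Real.abs_cos_le_one _)
    calc |Real.cos (latticeAngle p.1)| ^ (2*m) / ((p.1.1:ℝ)^2 + (p.1.2:ℝ)^2) ^ s.re
        ≤ 1 / ((p.1.1:ℝ)^2 + (p.1.2:ℝ)^2) ^ s.re := by gcongr
      _ = ((p.1.1:ℝ)^2 + (p.1.2:ℝ)^2) ^ (-s.re) := by
          rw [Real.rpow_neg hr0.le, one_div]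
      _ ≤ (‖(![p.1.1, p.1.2] : Fin 2 → ℤ)‖ ^ ((2:ℕ):ℝ)) ^ (-s.re) :=
          Real.rpow_le_rpow_of_nonpos (by positivity) (hv_sq p) (by linarith)
      _ = ‖(![p.1.1, p.1.2] : Fin 2 → ℤ)‖ ^ (-(2 * s.re)) := by
          rw [← Real.rpow_mul (norm_nonneg _)]
          norm_num
  have key : Filter.Tendsto (fun m : ℕ => ∑' p : {p : ℤ × ℤ // p ≠ 0},
      ((Real.cos (latticeAngle p.1) : ℂ)) ^ (2 * m) /
        (((p.1.1 : ℂ)) ^ 2 + ((p.1.2 : ℂ)) ^ 2) ^ s) Filter.atTop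
      (nhds (∑' p : {p : ℤ × ℤ // p ≠ 0},
        if p.1.2 = 0 then 1 / (((p.1.1 : ℂ)) ^ 2 + ((p.1.2 : ℂ)) ^ 2) ^ s else 0)) := by
    apply tendsto_tsum_of_dominated_convergence hB_sum ?_
      (Filter.Eventually.of_forall (fun m p => hbound m p))
    intro p
    by_cases h2 : p.1.2 = 0
    · have hcos : ((Real.cos (latticeAngle p.1) : ℂ)) ^ 2 = 1 := by
        rw [← Complex.ofReal_pow, lat_cos_sq_eq_one p.2 h2, Complex.ofReal_one]
      have heq : ∀ m : ℕ, ((Real.cos (latticeAngle p.1) : ℂ)) ^ (2*m) /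
          (((p.1.1 : ℂ)) ^ 2 + ((p.1.2 : ℂ)) ^ 2) ^ s
          = 1 / (((p.1.1 : ℂ)) ^ 2 + ((p.1.2 : ℂ)) ^ 2) ^ s := by
        intro m; rw [pow_mul, hcos, one_pow]
      rw [if_pos h2]
      simp only [heq]
      exact tendsto_const_nhds
    · rw [if_neg h2]
      have hlt : ‖((Real.cos (latticeAngle p.1) : ℂ)) ^ 2‖ < 1 := by
        rw [← Complex.ofReal_pow, Complex.norm_real, Real.norm_eq_abs,
          _root_.abs_of_nonneg (sq_nonneg (Real.cos (latticeAngle p.1)))]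
        exact lat_cos_sq_lt_one p.2 h2
      have h0 := tendsto_pow_atTop_nhds_zero_of_norm_lt_one hlt
      have h1 := h0.div_const ((((p.1.1 : ℂ)) ^ 2 + ((p.1.2 : ℂ)) ^ 2) ^ s)
      rw [zero_div] at h1
      refine h1.congr fun m => ?_
      rw [← pow_mul]
  rw [← lat_g_tsum s hs]
  simp only [latC, Nat.cast_one, one_mul]
  exact key
end

section
/- For every positive integer m and every s ∈ ℂ with Re(s) > 1: 𝒞(2,2m−1;s) = 𝒮(2,2m−1;s) = (1/2)·𝒞(0,1;s); that is, Σ' cos²((2m−1)θ_{p₁,p₂})/(p₁²+p₂²)^s = Σ' sin²((2m−1)θ_{p₁,p₂})/(p₁²+p₂²)^s = (1/2)·Σ' 1/(p₁²+p₂²)^s. -/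
open Real

private lemma latAux_sin_sq_add_nat_mul_pi (x : ℝ) (j : ℕ) :
    Real.sin (x + j * π) ^ 2 = Real.sin x ^ 2 := by
  induction j with
  | zero => simp
  | succ n ih =>
    have h : x + (n + 1 : ℕ) * π = (x + n * π) + π := by push_cast; ring
    rw [h, Real.sin_add_pi, neg_sq, ih]

private lemma latAux_key_angle (m : ℕ) (hm : 1 ≤ m) (p : ℤ × ℤ) (hp : p ≠ 0) :
    (Real.sin (((2 * m - 1 : ℕ) : ℝ) * latticeAngle (-p.2, p.1))) ^ 2 =
      (Real.cos (((2 * m - 1 : ℕ) : ℝ) * latticeAngle p)) ^ 2 := by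
  set z : ℂ := (p.1 : ℂ) + (p.2 : ℂ) * Complex.I with hzdef
  have hz : z ≠ 0 := by
    intro h
    apply hp
    have h1 : (p.1 : ℝ) = 0 := by simpa [hzdef] using congrArg Complex.re h
    have h2 : (p.2 : ℝ) = 0 := by simpa [hzdef] using congrArg Complex.im h
    exact Prod.ext (by exact_mod_cast h1) (by exact_mod_cast h2)
  have hIz : latticeAngle (-p.2, p.1) = Complex.arg (Complex.I * z) := by
    unfold latticeAngle
    congr 1
    rw [hzdef]
    push_cast
    ring_nf
    rw [Complex.I_sq]
    ring
  have hang : (Complex.arg (Complex.I * z) : Real.Angle)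
      = ((π / 2 + Complex.arg z : ℝ) : Real.Angle) := by
    rw [Complex.arg_mul_coe_angle Complex.I_ne_zero hz, Complex.arg_I, Real.Angle.coe_add]
  obtain ⟨k, hk⟩ := Real.Angle.angle_eq_iff_two_pi_dvd_sub.mp hang
  have harg : Complex.arg (Complex.I * z) = π / 2 + Complex.arg z + 2 * π * k := by
    linarith [hk]
  have hn : ((2 * m - 1 : ℕ) : ℝ) = 2 * (m : ℝ) - 1 := by
    push_cast [Nat.cast_sub (by omega : 1 ≤ 2 * m)]; ring
  set a := Complex.arg z
  have hexp : ((2 * m - 1 : ℕ) : ℝ) * latticeAngle (-p.2, p.1)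
      = (((2 * m - 1 : ℕ) : ℝ) * a - π / 2 + m * π)
        + (((2 * (m : ℤ) - 1) * k : ℤ) : ℝ) * (2 * π) := by
    rw [hIz, harg, hn]
    push_cast
    ring
  have hpz : latticeAngle p = a := by rw [latticeAngle, ← hzdef]
  rw [hexp, Real.sin_add_int_mul_two_pi, latAux_sin_sq_add_nat_mul_pi, sub_eq_add_neg,
    ← sub_eq_add_neg, Real.sin_sub_pi_div_two, neg_sq, hpz]

private lemma latAux_r_pos (p : {p : ℤ × ℤ // p ≠ 0}) :
    0 < (p.1.1 : ℝ) ^ 2 + (p.1.2 : ℝ) ^ 2 := by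
  rcases eq_or_ne p.1.1 0 with h1 | h1
  · have h2 : p.1.2 ≠ 0 := by
      intro h2; exact p.2 (Prod.ext h1 h2)
    have : ((p.1.2 : ℝ)) ≠ 0 := by exact_mod_cast h2
    positivity
  · have : ((p.1.1 : ℝ)) ≠ 0 := by exact_mod_cast h1
    positivity

private lemma latAux_summable_base (s : ℂ) (hs : 1 < s.re) :
    Summable fun p : {p : ℤ × ℤ // p ≠ 0} =>
      ((p.1.1 : ℝ) ^ 2 + (p.1.2 : ℝ) ^ 2) ^ (-s.re) := by
  have h := EisensteinSeries.summable_one_div_norm_rpow (k := 2 * s.re) (by linarith)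
  have h2 : Summable fun q : ℤ × ℤ => ‖(![q.1, q.2] : Fin 2 → ℤ)‖ ^ (-(2 * s.re)) := by
    have := h.comp_injective (finTwoArrowEquiv ℤ).symm.injective
    simp [finTwoArrowEquiv] at this; exact this
  have h3 := h2.comp_injective (Subtype.val_injective (p := fun p : ℤ × ℤ => p ≠ 0))
  refine h3.of_nonneg_of_le (fun p => Real.rpow_nonneg (latAux_r_pos p).le _) (fun p => ?_)
  have hN : ‖(![p.1.1, p.1.2] : Fin 2 → ℤ)‖ = max (p.1.1.natAbs : ℝ) (p.1.2.natAbs : ℝ) := by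
    rw [EisensteinSeries.norm_eq_max_natAbs]; push_cast; rfl
  have hNpos : (0:ℝ) < ‖(![p.1.1, p.1.2] : Fin 2 → ℤ)‖ := by
    rw [norm_pos_iff]
    intro hcontra
    apply p.2
    have h0 := congrFun hcontra 0
    have h1 := congrFun hcontra 1
    simp at h0 h1
    exact Prod.ext h0 h1
  set N := ‖(![p.1.1, p.1.2] : Fin 2 → ℤ)‖ with hNdef
  have hsq : N ^ (2:ℕ) ≤ (p.1.1 : ℝ) ^ 2 + (p.1.2 : ℝ) ^ 2 := by
    rw [hN]
    rcases max_cases (p.1.1.natAbs : ℝ) (p.1.2.natAbs : ℝ) with ⟨he, _⟩ | ⟨he, _⟩ <;>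
      rw [he] <;>
      [ (have : ((p.1.1.natAbs : ℝ)) ^ 2 = (p.1.1 : ℝ) ^ 2 := by
          simp [Nat.cast_natAbs, sq_abs]);
        (have : ((p.1.2.natAbs : ℝ)) ^ 2 = (p.1.2 : ℝ) ^ 2 := by
          simp [Nat.cast_natAbs, sq_abs]) ] <;>
      nlinarith [sq_nonneg ((p.1.1 : ℝ)), sq_nonneg ((p.1.2 : ℝ))]
  calc ((p.1.1 : ℝ) ^ 2 + (p.1.2 : ℝ) ^ 2) ^ (-s.re)
      ≤ (N ^ (2:ℕ)) ^ (-s.re) :=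
        Real.rpow_le_rpow_of_nonpos (by positivity) hsq (by linarith)
    _ = N ^ (-(2 * s.re)) := by
        rw [← Real.rpow_natCast N 2, ← Real.rpow_mul hNpos.le]; norm_num

private lemma latAux_R_cast (p : {p : ℤ × ℤ // p ≠ 0}) :
    ((p.1.1 : ℂ)) ^ 2 + ((p.1.2 : ℂ)) ^ 2
      = ((((p.1.1 : ℝ) ^ 2 + (p.1.2 : ℝ) ^ 2 : ℝ)) : ℂ) := by
  push_cast; ring

private lemma latAux_summable (s : ℂ) (hs : 1 < s.re) (g : {p : ℤ × ℤ // p ≠ 0} → ℝ)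
    (hg : ∀ p, |g p| ≤ 1) :
    Summable fun p : {p : ℤ × ℤ // p ≠ 0} =>
      ((g p : ℂ)) / ((((p.1.1 : ℂ)) ^ 2 + ((p.1.2 : ℂ)) ^ 2) ^ s) := by
  apply Summable.of_norm
  refine (latAux_summable_base s hs).of_nonneg_of_le (fun p => norm_nonneg _) (fun p => ?_)
  have hr := latAux_r_pos p
  rw [latAux_R_cast p, norm_div,
    Complex.norm_cpow_eq_rpow_re_of_pos hr, Real.rpow_neg hr.le]
  rw [div_eq_mul_inv]
  have h1 : ‖((g p : ℂ))‖ ≤ 1 := by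
    simpa using hg p
  calc ‖((g p : ℂ))‖ * (((p.1.1:ℝ)^2 + (p.1.2:ℝ)^2) ^ s.re)⁻¹
      ≤ 1 * (((p.1.1:ℝ)^2 + (p.1.2:ℝ)^2) ^ s.re)⁻¹ := by
        apply mul_le_mul_of_nonneg_right h1
        positivity
    _ = (((p.1.1:ℝ)^2 + (p.1.2:ℝ)^2) ^ s.re)⁻¹ := one_mul _

/-- The rotation-by-`π/2` equivalence on nonzero lattice points. -/
def latRot : {p : ℤ × ℤ // p ≠ 0} ≃ {p : ℤ × ℤ // p ≠ 0} where
  toFun p := ⟨(-p.1.2, p.1.1), by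
    intro h
    apply p.2
    have h1 : p.1.2 = 0 := by simpa using congrArg Prod.fst h
    have h2 : p.1.1 = 0 := by simpa using congrArg Prod.snd h
    exact Prod.ext h2 h1⟩
  invFun p := ⟨(p.1.2, -p.1.1), by
    intro h
    apply p.2
    have h1 : p.1.2 = 0 := by simpa using congrArg Prod.fst h
    have h2 : p.1.1 = 0 := by simpa using congrArg Prod.snd h
    exact Prod.ext h2 h1⟩
  left_inv p := by ext <;> simp
  right_inv p := by ext <;> simp

/-- For every positive integer `m` and `s` with `Re s > 1`,
`𝒞(2, 2m-1; s) = 𝒮(2, 2m-1; s) = (1/2) 𝒞(0,1;s)`. -/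
theorem latC_two_odd_eq (m : ℕ) (hm : 1 ≤ m) (s : ℂ) (hs : 1 < s.re) :
    latC 2 (2 * m - 1) s = latS 2 (2 * m - 1) s ∧
      latC 2 (2 * m - 1) s = (1 / 2) * latC 0 1 s := by
  set n := 2 * m - 1 with hndef
  have hCS : latC 2 n s = latS 2 n s := by
    rw [latC, latS, ← Equiv.tsum_eq latRot
      (fun p : {p : ℤ × ℤ // p ≠ 0} =>
        ((Real.sin ((n : ℝ) * latticeAngle p.1) : ℂ)) ^ 2 /
          (((p.1.1 : ℂ)) ^ 2 + ((p.1.2 : ℂ)) ^ 2) ^ s)]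
    refine tsum_congr fun p => ?_
    have hkey := latAux_key_angle m hm p.1 p.2
    have hden : (((-p.1.2 : ℤ) : ℂ)) ^ 2 + ((p.1.1 : ℂ)) ^ 2
        = ((p.1.1 : ℂ)) ^ 2 + ((p.1.2 : ℂ)) ^ 2 := by push_cast; ring
    show ((Real.cos ((n : ℝ) * latticeAngle p.1) : ℂ)) ^ 2 /
          (((p.1.1 : ℂ)) ^ 2 + ((p.1.2 : ℂ)) ^ 2) ^ s
        = ((Real.sin ((n : ℝ) * latticeAngle (-p.1.2, p.1.1)) : ℂ)) ^ 2 /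
          ((((-p.1.2 : ℤ) : ℂ)) ^ 2 + ((p.1.1 : ℂ)) ^ 2) ^ s
    rw [hden]
    congr 1
    exact_mod_cast hkey.symm
  have hgC : ∀ p : {p : ℤ × ℤ // p ≠ 0},
      |Real.cos ((n : ℝ) * latticeAngle p.1) ^ 2| ≤ 1 := by
    intro p
    rw [abs_pow]
    exact pow_le_one₀ (abs_nonneg _) (Real.abs_cos_le_one _)
  have hgS : ∀ p : {p : ℤ × ℤ // p ≠ 0},
      |Real.sin ((n : ℝ) * latticeAngle p.1) ^ 2| ≤ 1 := by
    intro p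
    rw [abs_pow]
    exact pow_le_one₀ (abs_nonneg _) (Real.abs_sin_le_one _)
  have hSC := latAux_summable s hs _ hgC
  have hSS := latAux_summable s hs _ hgS
  have hsum : latC 2 n s + latS 2 n s = latC 0 1 s := by
    rw [latC, latS, latC]
    have hC2 : (∑' p : {p : ℤ × ℤ // p ≠ 0},
        ((Real.cos ((n : ℝ) * latticeAngle p.1) : ℂ)) ^ 2 /
          (((p.1.1 : ℂ)) ^ 2 + ((p.1.2 : ℂ)) ^ 2) ^ s)
        = ∑' p : {p : ℤ × ℤ // p ≠ 0},
        (((Real.cos ((n : ℝ) * latticeAngle p.1) ^ 2 : ℝ)) : ℂ) /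
          (((p.1.1 : ℂ)) ^ 2 + ((p.1.2 : ℂ)) ^ 2) ^ s := by
      refine tsum_congr fun p => ?_; push_cast; ring
    have hS2 : (∑' p : {p : ℤ × ℤ // p ≠ 0},
        ((Real.sin ((n : ℝ) * latticeAngle p.1) : ℂ)) ^ 2 /
          (((p.1.1 : ℂ)) ^ 2 + ((p.1.2 : ℂ)) ^ 2) ^ s)
        = ∑' p : {p : ℤ × ℤ // p ≠ 0},
        (((Real.sin ((n : ℝ) * latticeAngle p.1) ^ 2 : ℝ)) : ℂ) /
          (((p.1.1 : ℂ)) ^ 2 + ((p.1.2 : ℂ)) ^ 2) ^ s := by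
      refine tsum_congr fun p => ?_; push_cast; ring
    rw [hC2, hS2, ← Summable.tsum_add hSC hSS]
    refine tsum_congr fun p => ?_
    rw [← add_div]
    congr 1
    rw [pow_zero]
    push_cast
    rw [add_comm]
    exact Complex.sin_sq_add_cos_sq _
  refine ⟨hCS, ?_⟩
  have h2 := hsum
  rw [← hCS] at h2
  linear_combination (1 / 2 : ℂ) * h2
end

section
/- For every s ∈ ℂ with Re(s) > 1: 𝒞(6,1;s) = (3/2)·𝒞(4,1;s) − (1/4)·𝒞(0,1;s); that is, Σ' cos⁶(θ_{p₁,p₂})/(p₁²+p₂²)^s = (3/2)·Σ' cos⁴(θ_{p₁,p₂})/(p₁²+p₂²)^s − (1/4)·Σ' 1/(p₁²+p₂²)^s. -/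
/-- Auxiliary: the general term of `latC n 1 s`. -/
noncomputable def latTerm (n : ℕ) (s : ℂ) (p : ℤ × ℤ) : ℂ :=
  ((Real.cos (latticeAngle p) : ℂ)) ^ n / (((p.1 : ℂ)) ^ 2 + ((p.2 : ℂ)) ^ 2) ^ s

/-- Swapping the two coordinates of a nonzero lattice point. -/
def latSwap : {p : ℤ × ℤ // p ≠ 0} ≃ {p : ℤ × ℤ // p ≠ 0} where
  toFun p := ⟨(p.1.2, p.1.1), by
    have := p.2
    simp [Prod.ext_iff] at *
    tauto⟩
  invFun p := ⟨(p.1.2, p.1.1), by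
    have := p.2
    simp [Prod.ext_iff] at *
    tauto⟩
  left_inv p := by simp
  right_inv p := by simp

lemma latSwap_cos_sq (p : ℤ × ℤ) (hp : p ≠ 0) :
    (Real.cos (latticeAngle (p.2, p.1)))^2 = 1 - (Real.cos (latticeAngle p))^2 := by
  have hw : ((p.2 : ℂ) + (p.1 : ℂ) * Complex.I) ≠ 0 := by
    simp [Complex.ext_iff, Prod.ext_iff] at *
    tauto
  have h1 : Real.cos (latticeAngle (p.2, p.1)) = Real.sin (latticeAngle p) := by
    rw [latticeAngle, latticeAngle, Complex.cos_arg hw, Complex.sin_arg]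
    simp [Complex.norm_def, Complex.normSq_apply]
    ring_nf
  rw [h1, Real.sin_sq]

lemma latTerm_summable (n : ℕ) (s : ℂ) (hs : 1 < s.re) :
    Summable (fun p : {p : ℤ × ℤ // p ≠ 0} => latTerm n s p.1) := by
  apply Summable.of_norm
  have hbig : Summable (fun x : Fin 2 → ℤ => ‖x‖ ^ (-(2 * s.re))) :=
    EisensteinSeries.summable_one_div_norm_rpow (by linarith)
  have hinj : Function.Injective
      (fun p : {p : ℤ × ℤ // p ≠ 0} => (![p.1.1, p.1.2] : Fin 2 → ℤ)) := by
    intro p q h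
    have h0 := congrFun h 0
    have h1 := congrFun h 1
    simp at h0 h1
    exact Subtype.ext (Prod.ext h0 h1)
  have hg : Summable (fun p : {p : ℤ × ℤ // p ≠ 0} =>
      ‖(![p.1.1, p.1.2] : Fin 2 → ℤ)‖ ^ (-(2 * s.re))) := hbig.comp_injective hinj
  apply hg.of_nonneg_of_le (fun p => norm_nonneg _)
  rintro ⟨⟨a, b⟩, hp⟩
  set M : ℝ := ‖(![a, b] : Fin 2 → ℤ)‖ with hM
  have hM1 : 1 ≤ M := by
    rw [hM, EisensteinSeries.norm_eq_max_natAbs]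
    simp only [Matrix.cons_val_zero, Matrix.cons_val_one, Matrix.head_cons]
    have : a ≠ 0 ∨ b ≠ 0 := by
      by_contra hc
      push_neg at hc
      exact hp (by simp [Prod.ext_iff, hc.1, hc.2])
    rcases this with h | h
    · have : 1 ≤ a.natAbs := Int.natAbs_pos.mpr h
      exact_mod_cast le_max_of_le_left (by exact_mod_cast this)
    · have : 1 ≤ b.natAbs := Int.natAbs_pos.mpr h
      exact_mod_cast le_max_of_le_right (by exact_mod_cast this)
  have hM0 : 0 < M := lt_of_lt_of_le one_pos hM1
  set x : ℝ := (a : ℝ) ^ 2 + (b : ℝ) ^ 2 with hx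
  have hMx : M ^ 2 ≤ x := by
    rw [hM, EisensteinSeries.norm_eq_max_natAbs, hx]
    simp only [Matrix.cons_val_zero, Matrix.cons_val_one, Matrix.head_cons]
    have ha : ((a.natAbs : ℕ) : ℝ) ^ 2 = (a : ℝ) ^ 2 := by
      push_cast [Nat.cast_natAbs, Int.cast_abs]; rw [sq_abs]
    have hb : ((b.natAbs : ℕ) : ℝ) ^ 2 = (b : ℝ) ^ 2 := by
      push_cast [Nat.cast_natAbs, Int.cast_abs]; rw [sq_abs]
    rcases le_total a.natAbs b.natAbs with h | h
    · rw [max_eq_right h]; nlinarith [sq_nonneg (a:ℝ)]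
    · rw [max_eq_left h]; nlinarith [sq_nonneg (b:ℝ)]
  have hx0 : (0:ℝ) < x := lt_of_lt_of_le (by positivity) hMx
  have hcast : (((a:ℂ)) ^ 2 + ((b:ℂ)) ^ 2) = ((x : ℝ) : ℂ) := by
    rw [hx]; push_cast; ring
  have hnorm : ‖latTerm n s (a, b)‖ ≤ 1 / x ^ s.re := by
    rw [latTerm]
    simp only [hcast, norm_div, norm_pow,
      Complex.norm_cpow_eq_rpow_re_of_pos hx0]
    gcongr
    · rw [Complex.norm_real, Real.norm_eq_abs]
      exact pow_le_one₀ (abs_nonneg _) (Real.abs_cos_le_one _)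
  refine hnorm.trans ?_
  have : M ^ (-(2 * s.re)) = (M ^ 2) ^ (-s.re) := by
    rw [← Real.rpow_natCast M 2, ← Real.rpow_mul hM0.le]
    ring_nf
  rw [this, one_div, ← Real.rpow_neg hx0.le]
  exact Real.rpow_le_rpow_of_nonpos (by positivity) hMx (by linarith)

lemma latTerm_pointwise (s : ℂ) (p : {p : ℤ × ℤ // p ≠ 0}) :
    latTerm 6 s p.1 + latTerm 6 s (latSwap p).1
      = (3/2) * (latTerm 4 s p.1 + latTerm 4 s (latSwap p).1)
        - (1/4) * (latTerm 0 s p.1 + latTerm 0 s (latSwap p).1) := by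
  obtain ⟨⟨a, b⟩, hp⟩ := p
  have hcos := latSwap_cos_sq (a, b) hp
  show latTerm 6 s (a, b) + latTerm 6 s (b, a)
      = (3/2) * (latTerm 4 s (a, b) + latTerm 4 s (b, a))
        - (1/4) * (latTerm 0 s (a, b) + latTerm 0 s (b, a))
  simp only [latTerm]
  have hD : (((b:ℂ)) ^ 2 + ((a:ℂ)) ^ 2) = (((a:ℂ)) ^ 2 + ((b:ℂ)) ^ 2) := by ring
  rw [hD]
  set c : ℂ := ((Real.cos (latticeAngle (a, b)) : ℝ) : ℂ) with hc
  set d : ℂ := ((Real.cos (latticeAngle (b, a)) : ℝ) : ℂ) with hd'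
  have hd : d ^ 2 = 1 - c ^ 2 := by
    have := congrArg (fun t : ℝ => (t : ℂ)) hcos
    push_cast at this
    rw [hc, hd']
    exact_mod_cast this
  have h6 : d ^ 6 = (1 - c ^ 2) ^ 3 := by
    rw [show d ^ 6 = (d ^ 2) ^ 3 from by ring, hd]
  have h4 : d ^ 4 = (1 - c ^ 2) ^ 2 := by
    rw [show d ^ 4 = (d ^ 2) ^ 2 from by ring, hd]
  rw [h6, h4]
  ring

lemma latC_eq_tsum (n : ℕ) (s : ℂ) :
    latC n 1 s = ∑' p : {p : ℤ × ℤ // p ≠ 0}, latTerm n s p.1 := by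
  rw [latC]
  exact tsum_congr fun p => by rw [latTerm]; norm_num

set_option maxHeartbeats 1000000 in
/-- For `Re s > 1`, `𝒞(6,1;s) = (3/2) 𝒞(4,1;s) - (1/4) 𝒞(0,1;s)`. -/
theorem latC_six_one_eq (s : ℂ) (hs : 1 < s.re) :
    latC 6 1 s = (3 / 2) * latC 4 1 s - (1 / 4) * latC 0 1 s := by
  have h6 := latTerm_summable 6 s hs
  have h4 := latTerm_summable 4 s hs
  have h0 := latTerm_summable 0 s hs
  have h6' : Summable (fun p : {p : ℤ × ℤ // p ≠ 0} => latTerm 6 s (latSwap p).1) :=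
    latSwap.summable_iff.mpr h6
  have h4' : Summable (fun p : {p : ℤ × ℤ // p ≠ 0} => latTerm 4 s (latSwap p).1) :=
    latSwap.summable_iff.mpr h4
  have h0' : Summable (fun p : {p : ℤ × ℤ // p ≠ 0} => latTerm 0 s (latSwap p).1) :=
    latSwap.summable_iff.mpr h0
  have key : (∑' p : {p : ℤ × ℤ // p ≠ 0}, latTerm 6 s p.1)
        + (∑' p : {p : ℤ × ℤ // p ≠ 0}, latTerm 6 s (latSwap p).1)
      = (3/2) * ((∑' p : {p : ℤ × ℤ // p ≠ 0}, latTerm 4 s p.1)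
          + (∑' p : {p : ℤ × ℤ // p ≠ 0}, latTerm 4 s (latSwap p).1))
        - (1/4) * ((∑' p : {p : ℤ × ℤ // p ≠ 0}, latTerm 0 s p.1)
          + (∑' p : {p : ℤ × ℤ // p ≠ 0}, latTerm 0 s (latSwap p).1)) := by
    rw [← Summable.tsum_add h6 h6', ← Summable.tsum_add h4 h4', ← Summable.tsum_add h0 h0',
      ← tsum_mul_left, ← tsum_mul_left,
      ← Summable.tsum_sub (((h4.add h4').mul_left _)) (((h0.add h0').mul_left _))]
    exact tsum_congr (latTerm_pointwise s)
  have hswap6 : (∑' p : {p : ℤ × ℤ // p ≠ 0}, latTerm 6 s (latSwap p).1)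
      = ∑' p : {p : ℤ × ℤ // p ≠ 0}, latTerm 6 s p.1 :=
    latSwap.tsum_eq (fun p => latTerm 6 s p.1)
  have hswap4 : (∑' p : {p : ℤ × ℤ // p ≠ 0}, latTerm 4 s (latSwap p).1)
      = ∑' p : {p : ℤ × ℤ // p ≠ 0}, latTerm 4 s p.1 :=
    latSwap.tsum_eq (fun p => latTerm 4 s p.1)
  have hswap0 : (∑' p : {p : ℤ × ℤ // p ≠ 0}, latTerm 0 s (latSwap p).1)
      = ∑' p : {p : ℤ × ℤ // p ≠ 0}, latTerm 0 s p.1 :=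
    latSwap.tsum_eq (fun p => latTerm 0 s p.1)
  rw [hswap6, hswap4, hswap0] at key
  rw [latC_eq_tsum 6 s, latC_eq_tsum 4 s, latC_eq_tsum 0 s]
  linear_combination key / 2
end

section
/- For every s ∈ ℂ with Re(s) > 1: 𝒞(1,8;s) = 128·𝒞(8,1;s) − 224·𝒞(4,1;s) + 49·𝒞(0,1;s); that is, Σ' cos(8θ_{p₁,p₂})/(p₁²+p₂²)^s = 128·Σ' cos⁸(θ_{p₁,p₂})/(p₁²+p₂²)^s − 224·Σ' cos⁴(θ_{p₁,p₂})/(p₁²+p₂²)^s + 49·Σ' 1/(p₁²+p₂²)^s. -/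
namespace LatAux

abbrev Sub := {p : ℤ × ℤ // p ≠ 0}

noncomputable def A (p : Sub) : ℝ := (p.1.1 : ℝ) ^ 2 + (p.1.2 : ℝ) ^ 2

noncomputable def D (s : ℂ) (p : Sub) : ℂ :=
  (((p.1.1 : ℂ)) ^ 2 + ((p.1.2 : ℂ)) ^ 2) ^ s

lemma A_pos (p : Sub) : 0 < A p := by
  have h : p.1.1 ≠ 0 ∨ p.1.2 ≠ 0 := by
    by_contra h
    push_neg at h
    exact p.2 (Prod.ext h.1 h.2)
  rcases h with h | h
  · have : (0:ℝ) < (p.1.1 : ℝ) ^ 2 := by positivity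
    have h2 : (0:ℝ) ≤ (p.1.2 : ℝ) ^ 2 := sq_nonneg _
    unfold A; linarith
  · have : (0:ℝ) < (p.1.2 : ℝ) ^ 2 := by positivity
    have h2 : (0:ℝ) ≤ (p.1.1 : ℝ) ^ 2 := sq_nonneg _
    unfold A; linarith

lemma D_eq (s : ℂ) (p : Sub) : D s p = ((A p : ℝ) : ℂ) ^ s := by
  unfold D A; push_cast; ring_nf

lemma norm_div_D (s : ℂ) (x : ℝ) (p : Sub) :
    ‖(x : ℂ) / D s p‖ = |x| / (A p) ^ s.re := by
  rw [D_eq, norm_div,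
    Complex.norm_cpow_eq_rpow_re_of_pos (A_pos p), Complex.norm_real, Real.norm_eq_abs]

lemma summable_main (s : ℂ) (hs : 1 < s.re) :
    Summable fun p : Sub => (A p) ^ (-s.re) := by
  have hk : (2:ℝ) < 2 * s.re := by linarith
  have h1 := EisensteinSeries.summable_one_div_norm_rpow hk
  set E := (finTwoArrowEquiv ℤ).symm with hE
  have h2 : Summable fun p : ℤ × ℤ => ‖E p‖ ^ (-(2 * s.re)) :=
    E.summable_iff.mpr h1
  have h3 := h2.subtype {p : ℤ × ℤ | p ≠ 0}
  refine h3.of_nonneg_of_le (fun p => Real.rpow_nonneg (A_pos p).le _) (fun p => ?_)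
  have hne : E p.1 ≠ 0 := by
    intro h
    apply p.2
    have := congrArg E.symm h
    simp [hE] at this; exact this
  have hEpos : (0:ℝ) < ‖E p.1‖ := norm_pos_iff.mpr hne
  have hkey : ‖E p.1‖ ^ (2:ℕ) ≤ A p := by
    rw [EisensteinSeries.norm_eq_max_natAbs]
    have h0 : ((E p.1 0).natAbs : ℝ) ^ (2:ℕ) = ((E p.1 0 : ℤ) : ℝ) ^ 2 := by
      rw [Nat.cast_natAbs]; push_cast; rw [sq_abs]
    have h1' : ((E p.1 1).natAbs : ℝ) ^ (2:ℕ) = ((E p.1 1 : ℤ) : ℝ) ^ 2 := by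
      rw [Nat.cast_natAbs]; push_cast; rw [sq_abs]
    have hE0 : E p.1 0 = p.1.1 := by simp [hE, finTwoArrowEquiv]
    have hE1 : E p.1 1 = p.1.2 := by simp [hE, finTwoArrowEquiv]
    unfold A
    rcases max_cases ((E p.1 0).natAbs : ℝ) ((E p.1 1).natAbs : ℝ) with ⟨h, _⟩ | ⟨h, _⟩
    · rw [Nat.cast_max] at *
      rw [h, h0, hE0]
      nlinarith [sq_nonneg ((p.1.2 : ℝ))]
    · rw [Nat.cast_max] at *
      rw [h, h1', hE1]
      nlinarith [sq_nonneg ((p.1.1 : ℝ))]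
  calc A p ^ (-s.re) ≤ (‖E p.1‖ ^ (2:ℕ)) ^ (-s.re) := by
        apply Real.rpow_le_rpow_of_nonpos (by positivity) hkey (by linarith)
    _ = ‖E p.1‖ ^ (-(2 * s.re)) := by
        rw [← Real.rpow_natCast ‖E p.1‖ 2, ← Real.rpow_mul hEpos.le]
        norm_num

lemma summable_aux (s : ℂ) (hs : 1 < s.re) (f : Sub → ℝ) (hf : ∀ p, |f p| ≤ 1) :
    Summable fun p : Sub => (f p : ℂ) / D s p := by
  refine (summable_main s hs).of_norm_bounded (fun p => ?_)
  rw [norm_div_D, Real.rpow_neg (A_pos p).le, ← one_div]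
  exact (div_le_div_iff_of_pos_right (Real.rpow_pos_of_pos (A_pos p) _)).mpr (hf p)

lemma mk_ne_zero (a b : ℤ) (h : ¬(a = 0 ∧ b = 0)) :
    (a : ℂ) + (b : ℂ) * Complex.I ≠ 0 := by
  intro h0
  apply h
  rw [Complex.ext_iff] at h0
  simp at h0
  exact_mod_cast h0

lemma abs_swap (a b : ℤ) :
    ‖(b : ℂ) + (a : ℂ) * Complex.I‖ =
      ‖(a : ℂ) + (b : ℂ) * Complex.I‖ := by
  rw [Complex.norm_def, Complex.norm_def]
  congr 1
  simp [Complex.normSq_apply]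
  ring

lemma cos_swap (p : Sub) :
    Real.cos (latticeAngle (p.1.2, p.1.1)) = Real.sin (latticeAngle p.1) := by
  have hne : ¬(p.1.1 = 0 ∧ p.1.2 = 0) := by
    intro h; exact p.2 (Prod.ext h.1 h.2)
  have hw : (p.1.2 : ℂ) + (p.1.1 : ℂ) * Complex.I ≠ 0 :=
    mk_ne_zero _ _ (fun h => hne ⟨h.2, h.1⟩)
  unfold latticeAngle
  rw [Complex.cos_arg hw, Complex.sin_arg, abs_swap]
  congr 1
  simp

/-- The coordinate-swap equivalence on nonzero lattice points. -/
def eSwap : Sub ≃ Sub :=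
  (Equiv.prodComm ℤ ℤ).subtypeEquiv (fun a => by
    constructor <;> · intro h h0; apply h; aesop)

lemma eSwap_fst (p : Sub) : (eSwap p).1 = (p.1.2, p.1.1) := rfl

/-- `cos(8θ)` as a polynomial in `cos θ`. -/
lemma cos_eight (θ : ℝ) : Real.cos (8 * θ) =
    128 * Real.cos θ ^ 8 - 256 * Real.cos θ ^ 6 + 160 * Real.cos θ ^ 4
      - 32 * Real.cos θ ^ 2 + 1 := by
  have h1 := Real.cos_two_mul θ
  have h2 := Real.cos_two_mul (2 * θ)
  have h3 := Real.cos_two_mul (4 * θ)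
  rw [show (8:ℝ) * θ = 2 * (4 * θ) by ring, h3,
    show (4:ℝ) * θ = 2 * (2 * θ) by ring, h2, h1]
  ring

end LatAux

open LatAux in
/-- For `Re s > 1`, `𝒞(1,8;s) = 128 𝒞(8,1;s) - 224 𝒞(4,1;s) + 49 𝒞(0,1;s)`. -/
theorem latC_one_eight_eq (s : ℂ) (hs : 1 < s.re) :
    latC 1 8 s = 128 * latC 8 1 s - 224 * latC 4 1 s + 49 * latC 0 1 s := by
  classical
  set c : Sub → ℝ := fun p => Real.cos (latticeAngle p.1) with hc
  set sn : Sub → ℝ := fun p => Real.sin (latticeAngle p.1) with hsn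
  have sumC : ∀ n : ℕ, Summable fun p : Sub => ((c p : ℝ) : ℂ) ^ n / D s p := by
    intro n
    have h := summable_aux s hs (fun p => (c p) ^ n) (fun p => by
      rw [abs_pow]; exact pow_le_one₀ (abs_nonneg _) (Real.abs_cos_le_one _))
    refine h.congr fun p => ?_
    push_cast; ring
  have sumS : ∀ n : ℕ, Summable fun p : Sub => ((sn p : ℝ) : ℂ) ^ n / D s p := by
    intro n
    have h := summable_aux s hs (fun p => (sn p) ^ n) (fun p => by
      rw [abs_pow]; exact pow_le_one₀ (abs_nonneg _) (Real.abs_sin_le_one _))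
    refine h.congr fun p => ?_
    push_cast; ring
  have key : ∀ n : ℕ, HasSum (fun p : Sub => ((c p : ℝ) : ℂ) ^ n / D s p) (latC n 1 s) := by
    intro n
    have h := (sumC n).hasSum
    have he : latC n 1 s = ∑' p : Sub, ((c p : ℝ) : ℂ) ^ n / D s p := by
      unfold latC
      apply tsum_congr
      intro p
      norm_num [hc, D]
    rw [he]; exact h
  have keyS : ∀ n : ℕ, HasSum (fun p : Sub => ((sn p : ℝ) : ℂ) ^ n / D s p) (latC n 1 s) := by
    intro n
    have h := (sumS n).hasSum
    have hswap : ∑' p : Sub, ((sn p : ℝ) : ℂ) ^ n / D s p = latC n 1 s := by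
      rw [← (key n).tsum_eq,
        ← Equiv.tsum_eq eSwap (fun p : Sub => ((c p : ℝ) : ℂ) ^ n / D s p)]
      apply tsum_congr
      intro p
      have h1 : c (eSwap p) = sn p := by
        rw [hc, hsn]
        simp only [eSwap_fst]
        exact cos_swap p
      have h2 : D s (eSwap p) = D s p := by
        unfold D
        rw [eSwap_fst]
        rw [add_comm ((p.1.2 : ℂ) ^ 2) ((p.1.1 : ℂ) ^ 2)]
      rw [h1, h2]
    rw [← hswap]; exact h
  have hC2 : latC 2 1 s + latC 2 1 s = latC 0 1 s := by
    have h := (key 2).add (keyS 2)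
    have hfun : (fun p : Sub => ((c p : ℝ) : ℂ) ^ 2 / D s p + ((sn p : ℝ) : ℂ) ^ 2 / D s p)
        = fun p : Sub => ((c p : ℝ) : ℂ) ^ 0 / D s p := by
      funext p
      have h1 : ((c p : ℝ) : ℂ) ^ 2 + ((sn p : ℝ) : ℂ) ^ 2 = 1 := by
        norm_cast
        exact Real.cos_sq_add_sin_sq _
      rw [pow_zero, ← add_div, h1]
    rw [hfun] at h
    exact h.unique (key 0)
  have hC6 : latC 6 1 s + latC 6 1 s = latC 0 1 s - 3 * latC 2 1 s + 3 * latC 4 1 s := by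
    have h := (key 6).add (keyS 6)
    have htarget := ((key 0).sub ((key 2).mul_left 3)).add ((key 4).mul_left 3)
    have hfun : (fun p : Sub => ((c p : ℝ) : ℂ) ^ 0 / D s p - 3 * (((c p : ℝ) : ℂ) ^ 2 / D s p)
          + 3 * (((c p : ℝ) : ℂ) ^ 4 / D s p))
        = fun p : Sub => ((c p : ℝ) : ℂ) ^ 6 / D s p + ((sn p : ℝ) : ℂ) ^ 6 / D s p := by
      funext p
      have hr : (sn p) ^ 6 = 1 - 3 * (c p) ^ 2 + 3 * (c p) ^ 4 - (c p) ^ 6 := by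
        have h2 : (sn p) ^ 2 = 1 - (c p) ^ 2 := Real.sin_sq _
        linear_combination ((sn p) ^ 4 + (sn p) ^ 2 * (1 - (c p) ^ 2) + (1 - (c p) ^ 2) ^ 2) * h2
      have hid : ((sn p : ℝ) : ℂ) ^ 6
          = 1 - 3 * ((c p : ℝ) : ℂ) ^ 2 + 3 * ((c p : ℝ) : ℂ) ^ 4 - ((c p : ℝ) : ℂ) ^ 6 := by
        calc ((sn p : ℝ) : ℂ) ^ 6 = (((sn p) ^ 6 : ℝ) : ℂ) := by push_cast; ring
          _ = _ := by rw [hr]; push_cast; ring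
      rw [hid, pow_zero]
      ring
    rw [hfun] at htarget
    exact h.unique htarget
  have hbig := (((((key 8).mul_left 128).sub ((key 6).mul_left 256)).add
    ((key 4).mul_left 160)).sub ((key 2).mul_left 32)).add (key 0)
  have hfun2 : (fun p : Sub => 128 * (((c p : ℝ) : ℂ) ^ 8 / D s p)
        - 256 * (((c p : ℝ) : ℂ) ^ 6 / D s p) + 160 * (((c p : ℝ) : ℂ) ^ 4 / D s p)
        - 32 * (((c p : ℝ) : ℂ) ^ 2 / D s p) + ((c p : ℝ) : ℂ) ^ 0 / D s p)
      = fun p : Sub => ((Real.cos (((8 : ℕ) : ℝ) * latticeAngle p.1) : ℝ) : ℂ) ^ 1 / D s p := by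
    funext p
    have h8 : Real.cos (((8 : ℕ) : ℝ) * latticeAngle p.1)
        = 128 * (c p) ^ 8 - 256 * (c p) ^ 6 + 160 * (c p) ^ 4 - 32 * (c p) ^ 2 + 1 := by
      rw [show ((8 : ℕ) : ℝ) = (8 : ℝ) by norm_num]
      exact cos_eight _
    rw [h8]
    push_cast
    ring
  rw [hfun2] at hbig
  have hL : latC 1 8 s = 128 * latC 8 1 s - 256 * latC 6 1 s + 160 * latC 4 1 s
      - 32 * latC 2 1 s + latC 0 1 s := by
    have he : latC 1 8 s
        = ∑' p : Sub, ((Real.cos (((8 : ℕ) : ℝ) * latticeAngle p.1) : ℝ) : ℂ) ^ 1 / D s p := rfl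
    rw [he, hbig.tsum_eq]
  linear_combination hL + (-128 : ℂ) * hC6 + 176 * hC2
end

section
/- For every s ∈ ℂ with Re(s) > 1: 𝒞(2,4;s) = 64·𝒞(8,1;s) − 112·𝒞(4,1;s) + 25·𝒞(0,1;s) and 𝒮(2,4;s) = −64·𝒞(8,1;s) + 112·𝒞(4,1;s) − 24·𝒞(0,1;s). -/
namespace LatAux

abbrev L := {p : ℤ × ℤ // p ≠ 0}

noncomputable def Qr (p : L) : ℝ := (p.1.1:ℝ)^2 + (p.1.2:ℝ)^2

lemma Qr_pos (p : L) : 0 < Qr p := by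
  obtain ⟨⟨a,b⟩, hp⟩ := p
  have h : a ≠ 0 ∨ b ≠ 0 := by
    by_contra h; push_neg at h
    exact hp (by simp [Prod.ext_iff, h.1, h.2])
  unfold Qr
  rcases h with h | h
  · have ha : (a:ℝ) ≠ 0 := Int.cast_ne_zero.mpr h
    positivity
  · have hb : (b:ℝ) ≠ 0 := Int.cast_ne_zero.mpr h
    positivity

lemma summable_aux_s17 (s : ℂ) (hs : 1 < s.re) (g : L → ℝ) (hg : ∀ p, |g p| ≤ 1) :
    Summable fun p : L => (g p : ℂ) / ((Qr p : ℂ))^s := by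
  have hk : (2:ℝ) < 2 * s.re := by linarith
  have h1 := EisensteinSeries.summable_one_div_norm_rpow hk
  have h2 : Summable fun q : ℤ × ℤ => ‖(finTwoArrowEquiv ℤ).symm q‖ ^ (-(2*s.re)) :=
    h1.comp_injective (finTwoArrowEquiv ℤ).symm.injective
  have h3 := h2.subtype {p : ℤ × ℤ | p ≠ 0}
  refine Summable.of_norm_bounded h3 ?_
  intro p
  set N : ℝ := ‖(finTwoArrowEquiv ℤ).symm p.1‖ with hN
  have hNpos : 0 < N := by
    rw [hN, norm_pos_iff]
    simp only [ne_eq, EmbeddingLike.map_eq_zero_iff]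
    exact fun h => p.2 (by simpa [Prod.ext_iff] using congrArg (finTwoArrowEquiv ℤ) h)
  have hNsq : N^2 ≤ Qr p := by
    rw [hN, EisensteinSeries.norm_eq_max_natAbs]
    obtain ⟨⟨a,b⟩, hp⟩ := p
    simp only [finTwoArrowEquiv_symm_apply]
    unfold Qr
    simp only [Matrix.cons_val_zero, Matrix.cons_val_one, Matrix.head_cons]
    push_cast [Nat.cast_natAbs, Int.cast_abs]
    rcases le_total |(a:ℝ)| |(b:ℝ)| with h | h
    · rw [max_eq_right h]
      nlinarith [_root_.sq_abs (b:ℝ), sq_nonneg (a:ℝ)]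
    · rw [max_eq_left h]
      nlinarith [_root_.sq_abs (a:ℝ), sq_nonneg (b:ℝ)]
  have key : Qr p ^ (-s.re) ≤ N ^ (-(2*s.re)) := by
    have hN2 : (0:ℝ) < N^2 := by positivity
    have h4 : Qr p ^ (-s.re) ≤ (N^2) ^ (-s.re) :=
      Real.rpow_le_rpow_of_nonpos hN2 hNsq (by linarith)
    refine h4.trans_eq ?_
    rw [← Real.rpow_natCast N 2, ← Real.rpow_mul hNpos.le]
    norm_num
  refine le_trans ?_ key
  rw [norm_div, Complex.norm_real,
    Complex.norm_cpow_eq_rpow_re_of_pos (Qr_pos p)]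
  rw [Real.rpow_neg (Qr_pos p).le, div_eq_mul_inv]
  have := hg p
  have h5 : (0:ℝ) < (Qr p ^ s.re)⁻¹ :=
    inv_pos.mpr (Real.rpow_pos_of_pos (Qr_pos p) _)
  calc ‖g p‖ * (Qr p ^ s.re)⁻¹ ≤ 1 * (Qr p ^ s.re)⁻¹ := by
        apply mul_le_mul_of_nonneg_right _ h5.le
        simpa using hg p
    _ = (Qr p ^ s.re)⁻¹ := one_mul _

end LatAux

namespace LatAux

lemma cos_angle (p : L) : Real.cos (latticeAngle p.1) = (p.1.1:ℝ) / Real.sqrt (Qr p) := by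
  have hz : ((p.1.1:ℂ) + (p.1.2:ℂ) * Complex.I) ≠ 0 := by
    intro h
    apply p.2
    have h1 : ((p.1.1:ℂ) + (p.1.2:ℂ) * Complex.I).re = 0 := by rw [h]; simp
    have h2 : ((p.1.1:ℂ) + (p.1.2:ℂ) * Complex.I).im = 0 := by rw [h]; simp
    simp at h1 h2
    exact Prod.ext (by exact_mod_cast h1) (by exact_mod_cast h2)
  rw [latticeAngle, Complex.cos_arg hz]
  have habs : ‖((p.1.1:ℂ) + (p.1.2:ℂ) * Complex.I)‖ = Real.sqrt (Qr p) := by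
    rw [Complex.norm_def]
    congr 1
    rw [Complex.normSq_apply]
    simp [Qr]
    ring
  rw [habs]
  norm_num

lemma sin_angle (p : L) : Real.sin (latticeAngle p.1) = (p.1.2:ℝ) / Real.sqrt (Qr p) := by
  rw [latticeAngle, Complex.sin_arg]
  have habs : ‖((p.1.1:ℂ) + (p.1.2:ℂ) * Complex.I)‖ = Real.sqrt (Qr p) := by
    rw [Complex.norm_def]
    congr 1
    rw [Complex.normSq_apply]
    simp [Qr]
    ring
  rw [habs]
  norm_num

/-- rotation by 90 degrees -/
def rot : L ≃ L where
  toFun p := ⟨(-p.1.2, p.1.1), by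
    intro h
    apply p.2
    rw [Prod.ext_iff] at h ⊢
    simp only [Prod.fst_zero, Prod.snd_zero, neg_eq_zero] at h ⊢
    exact ⟨h.2, h.1⟩⟩
  invFun p := ⟨(p.1.2, -p.1.1), by
    intro h
    apply p.2
    rw [Prod.ext_iff] at h ⊢
    simp only [Prod.fst_zero, Prod.snd_zero, neg_eq_zero] at h ⊢
    exact ⟨h.2, h.1⟩⟩
  left_inv p := by ext <;> simp
  right_inv p := by ext <;> simp

lemma Qr_rot (p : L) : Qr (rot p) = Qr p := by
  unfold Qr rot
  simp
  ring

lemma cos_rot (p : L) : Real.cos (latticeAngle (rot p).1) =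
    - Real.sin (latticeAngle p.1) := by
  rw [cos_angle, sin_angle, Qr_rot]
  show ((-p.1.2 : ℤ) : ℝ) / _ = _
  push_cast
  ring

end LatAux


namespace LatAux

noncomputable def Fc (s : ℂ) (n : ℕ) (p : L) : ℂ :=
  ((Real.cos (latticeAngle p.1) : ℝ) : ℂ) ^ n / ((Qr p : ℝ) : ℂ) ^ s

noncomputable def Fs (s : ℂ) (n : ℕ) (p : L) : ℂ :=
  ((Real.sin (latticeAngle p.1) : ℝ) : ℂ) ^ n / ((Qr p : ℝ) : ℂ) ^ s

lemma summable_pow (s : ℂ) (hs : 1 < s.re) (g : L → ℝ) (hg : ∀ p, |g p| ≤ 1) (n : ℕ) :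
    Summable fun p : L => ((g p : ℝ) : ℂ) ^ n / ((Qr p : ℝ) : ℂ) ^ s := by
  have h := summable_aux_s17 s hs (fun p => g p ^ n)
    (fun p => by
      rw [abs_pow]
      exact pow_le_one₀ (abs_nonneg _) (hg p))
  refine h.congr fun p => ?_
  push_cast
  ring

lemma summable_Fc (s : ℂ) (hs : 1 < s.re) (n : ℕ) : Summable (Fc s n) :=
  summable_pow s hs _ (fun p => Real.abs_cos_le_one _) n

lemma summable_Fs (s : ℂ) (hs : 1 < s.re) (n : ℕ) : Summable (Fs s n) :=
  summable_pow s hs _ (fun p => Real.abs_sin_le_one _) n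

lemma denom_eq (p : L) : ((p.1.1 : ℂ)) ^ 2 + ((p.1.2 : ℂ)) ^ 2 = ((Qr p : ℝ) : ℂ) := by
  unfold Qr
  push_cast
  ring

lemma latC_one_eq (n : ℕ) (s : ℂ) : latC n 1 s = ∑' p : L, Fc s n p := by
  refine tsum_congr fun p => ?_
  rw [denom_eq]
  simp [Fc]

lemma tsum_Fs_eq (n : ℕ) (hn : Even n) (s : ℂ) : ∑' p : L, Fs s n p = ∑' p : L, Fc s n p := by
  rw [← rot.tsum_eq (Fc s n)]
  refine tsum_congr fun p => ?_
  unfold Fs Fc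
  rw [Qr_rot, cos_rot]
  congr 1
  push_cast
  rw [hn.neg_pow]

end LatAux

namespace LatAux

lemma cos_four_mul (θ : ℝ) :
    Real.cos (4 * θ) = 8 * Real.cos θ ^ 4 - 8 * Real.cos θ ^ 2 + 1 := by
  have h : (4:ℝ) * θ = 2 * (2 * θ) := by ring
  rw [h, Real.cos_two_mul, Real.cos_two_mul]
  ring

lemma cos_four_sq (θ : ℝ) :
    Real.cos (4 * θ) ^ 2 =
      64 * Real.cos θ ^ 8 - 128 * Real.cos θ ^ 6 + 80 * Real.cos θ ^ 4
        - 16 * Real.cos θ ^ 2 + 1 := by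
  rw [cos_four_mul]
  ring

lemma six_pow (θ : ℝ) :
    Real.cos θ ^ 6 + Real.sin θ ^ 6 = 1 - 3 * Real.cos θ ^ 2 + 3 * Real.cos θ ^ 4 := by
  have hcs := Real.sin_sq_add_cos_sq θ
  linear_combination (Real.sin θ ^ 4 + Real.sin θ ^ 2 * (1 - Real.cos θ ^ 2)
    + (1 - Real.cos θ ^ 2) ^ 2) * hcs

end LatAux

open LatAux

/-- For `Re s > 1`, `𝒞(2,4;s) = 64 𝒞(8,1;s) - 112 𝒞(4,1;s) + 25 𝒞(0,1;s)` and
`𝒮(2,4;s) = -64 𝒞(8,1;s) + 112 𝒞(4,1;s) - 24 𝒞(0,1;s)`. -/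
theorem latC_two_four_eq (s : ℂ) (hs : 1 < s.re) :
    latC 2 4 s = 64 * latC 8 1 s - 112 * latC 4 1 s + 25 * latC 0 1 s ∧
      latS 2 4 s = -64 * latC 8 1 s + 112 * latC 4 1 s - 24 * latC 0 1 s := by
  set T0 := ∑' p : L, Fc s 0 p with hT0
  set T2 := ∑' p : L, Fc s 2 p with hT2
  set T4 := ∑' p : L, Fc s 4 p with hT4
  set T6 := ∑' p : L, Fc s 6 p with hT6
  set T8 := ∑' p : L, Fc s 8 p with hT8
  have h0 : HasSum (Fc s 0) T0 := (summable_Fc s hs 0).hasSum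
  have h2 : HasSum (Fc s 2) T2 := (summable_Fc s hs 2).hasSum
  have h4 : HasSum (Fc s 4) T4 := (summable_Fc s hs 4).hasSum
  have h6 : HasSum (Fc s 6) T6 := (summable_Fc s hs 6).hasSum
  have h8 : HasSum (Fc s 8) T8 := (summable_Fc s hs 8).hasSum
  have hs2 : HasSum (Fs s 2) T2 := by
    have := (summable_Fs s hs 2).hasSum
    rwa [tsum_Fs_eq 2 ⟨1, rfl⟩ s, ← hT2] at this
  have hs6 : HasSum (Fs s 6) T6 := by
    have := (summable_Fs s hs 6).hasSum
    rwa [tsum_Fs_eq 6 ⟨3, rfl⟩ s, ← hT6] at this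
  -- relation 1 : T0 = 2 * T2
  have rel1 : T0 = 2 * T2 := by
    have A : HasSum (fun p => Fc s 2 p + Fs s 2 p) (T2 + T2) := h2.add hs2
    have B : (fun p : L => Fc s 2 p + Fs s 2 p) = Fc s 0 := by
      funext p
      unfold Fc Fs
      have hr : Real.cos (latticeAngle p.1) ^ 2 + Real.sin (latticeAngle p.1) ^ 2 = 1 := by
        rw [add_comm]; exact Real.sin_sq_add_cos_sq _
      have hnum : ((Real.cos (latticeAngle p.1) : ℝ) : ℂ) ^ 2
          + ((Real.sin (latticeAngle p.1) : ℝ) : ℂ) ^ 2 = 1 := by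
        exact_mod_cast congrArg (Complex.ofReal) hr
      simp only [div_eq_mul_inv]
      linear_combination (((Qr p : ℝ) : ℂ) ^ s)⁻¹ * hnum
    rw [B] at A
    rw [h0.unique A]
    ring
  -- relation 2 : T0 - 3*T2 + 3*T4 = 2*T6
  have rel2 : T0 - 3 * T2 + 3 * T4 = 2 * T6 := by
    have A : HasSum (fun p => Fc s 6 p + Fs s 6 p) (T6 + T6) := h6.add hs6
    have C : HasSum (fun p => Fc s 0 p - 3 * Fc s 2 p + 3 * Fc s 4 p)
        (T0 - 3 * T2 + 3 * T4) := (h0.sub (h2.mul_left 3)).add (h4.mul_left 3)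
    have B : (fun p : L => Fc s 6 p + Fs s 6 p)
        = fun p => Fc s 0 p - 3 * Fc s 2 p + 3 * Fc s 4 p := by
      funext p
      unfold Fc Fs
      have h6p := six_pow (latticeAngle p.1)
      have hnum : ((Real.cos (latticeAngle p.1) : ℝ) : ℂ) ^ 6
          + ((Real.sin (latticeAngle p.1) : ℝ) : ℂ) ^ 6
          = 1 - 3 * ((Real.cos (latticeAngle p.1) : ℝ) : ℂ) ^ 2
            + 3 * ((Real.cos (latticeAngle p.1) : ℝ) : ℂ) ^ 4 := by
        exact_mod_cast congrArg (Complex.ofReal) h6p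
      simp only [div_eq_mul_inv]
      linear_combination (((Qr p : ℝ) : ℂ) ^ s)⁻¹ * hnum
    rw [B] at A
    rw [← A.unique C]
    ring
  -- main sum for cos part
  have Hcos : HasSum (fun p : L => ((Real.cos (4 * latticeAngle p.1) : ℝ) : ℂ) ^ 2
      / ((Qr p : ℝ) : ℂ) ^ s) (64 * T8 - 128 * T6 + 80 * T4 - 16 * T2 + T0) := by
    have A : HasSum (fun p : L => 64 * Fc s 8 p - 128 * Fc s 6 p + 80 * Fc s 4 p
        - 16 * Fc s 2 p + Fc s 0 p) (64 * T8 - 128 * T6 + 80 * T4 - 16 * T2 + T0) :=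
      ((((h8.mul_left 64).sub (h6.mul_left 128)).add (h4.mul_left 80)).sub
        (h2.mul_left 16)).add h0
    have B : (fun p : L => 64 * Fc s 8 p - 128 * Fc s 6 p + 80 * Fc s 4 p
        - 16 * Fc s 2 p + Fc s 0 p)
        = fun p : L => ((Real.cos (4 * latticeAngle p.1) : ℝ) : ℂ) ^ 2
          / ((Qr p : ℝ) : ℂ) ^ s := by
      funext p
      unfold Fc
      have hnum : ((Real.cos (4 * latticeAngle p.1) : ℝ) : ℂ) ^ 2
          = 64 * ((Real.cos (latticeAngle p.1) : ℝ) : ℂ) ^ 8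
            - 128 * ((Real.cos (latticeAngle p.1) : ℝ) : ℂ) ^ 6
            + 80 * ((Real.cos (latticeAngle p.1) : ℝ) : ℂ) ^ 4
            - 16 * ((Real.cos (latticeAngle p.1) : ℝ) : ℂ) ^ 2 + 1 := by
        exact_mod_cast congrArg (Complex.ofReal) (cos_four_sq (latticeAngle p.1))
      simp only [div_eq_mul_inv]
      linear_combination -(((Qr p : ℝ) : ℂ) ^ s)⁻¹ * hnum
    rw [← B]
    exact A
  -- main sum for sin part
  have Hsin : HasSum (fun p : L => ((Real.sin (4 * latticeAngle p.1) : ℝ) : ℂ) ^ 2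
      / ((Qr p : ℝ) : ℂ) ^ s)
      (T0 - (64 * T8 - 128 * T6 + 80 * T4 - 16 * T2 + T0)) := by
    have A := h0.sub Hcos
    have B : (fun p : L => Fc s 0 p - ((Real.cos (4 * latticeAngle p.1) : ℝ) : ℂ) ^ 2
        / ((Qr p : ℝ) : ℂ) ^ s)
        = fun p : L => ((Real.sin (4 * latticeAngle p.1) : ℝ) : ℂ) ^ 2
          / ((Qr p : ℝ) : ℂ) ^ s := by
      funext p
      unfold Fc
      have hr : Real.sin (4 * latticeAngle p.1) ^ 2
          = 1 - Real.cos (4 * latticeAngle p.1) ^ 2 := by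
        have := Real.sin_sq_add_cos_sq (4 * latticeAngle p.1)
        linarith
      have hnum : ((Real.sin (4 * latticeAngle p.1) : ℝ) : ℂ) ^ 2
          = 1 - ((Real.cos (4 * latticeAngle p.1) : ℝ) : ℂ) ^ 2 := by
        exact_mod_cast congrArg (Complex.ofReal) hr
      simp only [div_eq_mul_inv]
      linear_combination -(((Qr p : ℝ) : ℂ) ^ s)⁻¹ * hnum
    rw [← B]
    exact A
  have e1 : latC 2 4 s = ∑' p : L, ((Real.cos (4 * latticeAngle p.1) : ℝ) : ℂ) ^ 2
      / ((Qr p : ℝ) : ℂ) ^ s := by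
    refine tsum_congr fun p => ?_
    rw [denom_eq]
    norm_num
  have e2 : latS 2 4 s = ∑' p : L, ((Real.sin (4 * latticeAngle p.1) : ℝ) : ℂ) ^ 2
      / ((Qr p : ℝ) : ℂ) ^ s := by
    refine tsum_congr fun p => ?_
    rw [denom_eq]
    norm_num
  constructor
  · rw [e1, Hcos.tsum_eq, latC_one_eq 8 s, latC_one_eq 4 s, latC_one_eq 0 s,
      ← hT8, ← hT4, ← hT0]
    linear_combination 64 * rel2 - 88 * rel1
  · rw [e2, Hsin.tsum_eq, latC_one_eq 8 s, latC_one_eq 4 s, latC_one_eq 0 s,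
      ← hT8, ← hT4, ← hT0]
    linear_combination -64 * rel2 + 88 * rel1
end

section
/- For every integer n ≥ 0 and every s ∈ ℂ with Re(s) > 1, the recurrence 𝒞(2n,1;s) = Σ_{l=0}^{n} C(n,l)·(−1)^l·𝒞(2l,1;s) holds, where C(n,l) is the binomial coefficient. Consequently, for n even this yields the identity Σ_{l=0}^{2k−1} C(2k,l)·(−1)^l·𝒞(2l,1;s) = 0 (writing n = 2k), while for n odd it expresses 𝒞(4k−2,1;s) in terms of lower-order sums: 𝒞(4k−2,1;s) = (1/2)·Σ_{l=0}^{2k−2} C(2k−1,l)·(−1)^l·𝒞(2l,1;s) (writing n = 2k−1). -/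
lemma aux_pos {p : ℤ × ℤ} (hp : p ≠ 0) : (0:ℝ) < (p.1:ℝ)^2 + (p.2:ℝ)^2 := by
  have h : ¬(p.1 = 0 ∧ p.2 = 0) := by simpa [Prod.ext_iff] using hp
  rcases not_and_or.mp h with h | h
  · have h' : (p.1:ℝ) ≠ 0 := Int.cast_ne_zero.mpr h
    nlinarith [sq_nonneg (p.2:ℝ), sq_abs (p.1:ℝ), abs_pos.mpr h']
  · have h' : (p.2:ℝ) ≠ 0 := Int.cast_ne_zero.mpr h
    nlinarith [sq_nonneg (p.1:ℝ), sq_abs (p.2:ℝ), abs_pos.mpr h']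

lemma aux_summable_bound {σ : ℝ} (hσ : 1 < σ) :
    Summable fun p : {p : ℤ × ℤ // p ≠ 0} =>
      (((p.1.1 : ℝ) ^ 2 + (p.1.2 : ℝ) ^ 2)) ^ (-σ) := by
  have h2 : (2 : ℝ) < 2 * σ := by linarith
  have h := EisensteinSeries.summable_one_div_norm_rpow h2
  have h' : Summable fun q : ℤ × ℤ => ‖(finTwoArrowEquiv ℤ).symm q‖ ^ (-(2*σ)) :=
    (finTwoArrowEquiv ℤ).symm.summable_iff.mpr h
  refine ((h'.subtype _).of_nonneg_of_le (fun p => by positivity) ?_)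
  intro p
  obtain ⟨⟨a, b⟩, hp⟩ := p
  have hb : (0:ℝ) < ‖(finTwoArrowEquiv ℤ).symm (a, b)‖ := by
    simp only [finTwoArrowEquiv_symm_apply]
    rw [norm_pos_iff]
    intro hz
    apply hp
    have := congrFun hz 0
    have := congrFun hz 1
    simp_all [Prod.ext_iff]
  have hle : ‖(finTwoArrowEquiv ℤ).symm (a, b)‖ ^ (2:ℕ) ≤ (a:ℝ)^2 + (b:ℝ)^2 := by
    have : ‖(finTwoArrowEquiv ℤ).symm (a, b)‖ = max |(a:ℝ)| |(b:ℝ)| := by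
      simp [finTwoArrowEquiv_symm_apply, EisensteinSeries.norm_eq_max_natAbs]
    rw [this]
    rcases max_cases |(a:ℝ)| |(b:ℝ)| with ⟨h1, _⟩ | ⟨h1, _⟩ <;> rw [h1] <;>
      nlinarith [sq_abs (a:ℝ), sq_abs (b:ℝ), sq_nonneg (a:ℝ), sq_nonneg (b:ℝ)]
  calc ((a:ℝ)^2 + (b:ℝ)^2) ^ (-σ)
      ≤ (‖(finTwoArrowEquiv ℤ).symm (a, b)‖ ^ (2:ℕ)) ^ (-σ) :=
        Real.rpow_le_rpow_of_nonpos (by positivity) hle (by linarith)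
    _ = ‖(finTwoArrowEquiv ℤ).symm (a, b)‖ ^ (-(2*σ)) := by
        rw [← Real.rpow_natCast _ 2, ← Real.rpow_mul hb.le]
        norm_num

lemma aux_summable (l : ℕ) {s : ℂ} (hs : 1 < s.re) :
    Summable fun p : {p : ℤ × ℤ // p ≠ 0} =>
      ((Real.cos ((1 : ℝ) * latticeAngle p.1) : ℂ)) ^ (2*l) /
        (((p.1.1 : ℂ)) ^ 2 + ((p.1.2 : ℂ)) ^ 2) ^ s := by
  have hb := aux_summable_bound hs
  refine Summable.of_norm (hb.of_nonneg_of_le (fun p => norm_nonneg _) ?_)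
  rintro ⟨⟨a, b⟩, hp⟩
  have hr : (0:ℝ) < (a:ℝ)^2 + (b:ℝ)^2 := aux_pos hp
  have hD : ((a:ℂ))^2 + ((b:ℂ))^2 = ((((a:ℝ)^2 + (b:ℝ)^2 : ℝ)):ℂ) := by push_cast; ring
  simp only [hD, norm_div, norm_pow, Complex.norm_real]
  have hnorm : ‖((((a:ℝ)^2 + (b:ℝ)^2 : ℝ)):ℂ) ^ s‖ = ((a:ℝ)^2 + (b:ℝ)^2) ^ s.re := by
    exact Complex.norm_cpow_eq_rpow_re_of_pos hr s
  rw [hnorm, Real.rpow_neg hr.le, ← one_div]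
  gcongr
  exact pow_le_one₀ (abs_nonneg _) (Real.abs_cos_le_one _)

lemma aux_sin_eq_cos_swap {p : ℤ × ℤ} (hp : p ≠ 0) :
    Real.sin ((1:ℝ) * latticeAngle p) = Real.cos ((1:ℝ) * latticeAngle p.swap) := by
  have hz : ((p.2 : ℂ) + (p.1 : ℂ) * Complex.I) ≠ 0 := by
    intro h
    apply hp
    have h1 := congrArg Complex.re h
    have h2 := congrArg Complex.im h
    simp at h1 h2
    exact Prod.ext (by exact_mod_cast h2) (by exact_mod_cast h1)
  unfold latticeAngle
  rw [one_mul, one_mul, Complex.sin_arg, Prod.snd_swap, Prod.fst_swap, Complex.cos_arg hz]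
  have : ‖((p.1 : ℂ) + (p.2 : ℂ) * Complex.I)‖ =
      ‖((p.2 : ℂ) + (p.1 : ℂ) * Complex.I)‖ := by
    rw [Complex.norm_def, Complex.norm_def, Complex.normSq_apply, Complex.normSq_apply]
    simp; ring_nf
  rw [this]
  simp

def auxSwapEquiv : {p : ℤ × ℤ // p ≠ 0} ≃ {p : ℤ × ℤ // p ≠ 0} :=
  (Equiv.prodComm ℤ ℤ).subtypeEquiv (fun p => by
    simp [Equiv.prodComm, Prod.ext_iff, and_comm])

lemma latS_eq_latC (n : ℕ) (s : ℂ) : latS n 1 s = latC n 1 s := by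
  set e := auxSwapEquiv with he
  rw [latS, latC]
  simp only [Nat.cast_one]
  rw [← Equiv.tsum_eq e (fun p : {p : ℤ × ℤ // p ≠ 0} =>
    ((Real.cos ((1 : ℝ) * latticeAngle p.1) : ℂ)) ^ n /
      (((p.1.1 : ℂ)) ^ 2 + ((p.1.2 : ℂ)) ^ 2) ^ s)]
  refine tsum_congr fun p => ?_
  have h1 : (e p).1 = p.1.swap := rfl
  rw [h1, aux_sin_eq_cos_swap p.2, Prod.fst_swap, Prod.snd_swap]
  push_cast
  ring_nf

lemma aux_sin_pow (x : ℝ) (n : ℕ) :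
    ((Real.sin x : ℂ)) ^ (2*n) =
      ∑ l ∈ Finset.range (n+1), (n.choose l : ℂ) * (-1)^l * ((Real.cos x : ℂ))^(2*l) := by
  have h : ((Real.sin x : ℂ))^2 = 1 - ((Real.cos x : ℂ))^2 := by
    exact_mod_cast congrArg (fun t : ℝ => (t:ℂ)) (Real.sin_sq x)
  rw [pow_mul, h, sub_eq_add_neg, add_comm, add_pow]
  refine Finset.sum_congr rfl fun l hl => ?_
  rw [pow_mul]
  ring

lemma latC_rec (s : ℂ) (hs : 1 < s.re) (n : ℕ) : latC (2 * n) 1 s =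
    ∑ l ∈ Finset.range (n + 1), (n.choose l : ℂ) * (-1) ^ l * latC (2 * l) 1 s := by
  rw [← latS_eq_latC, latS]
  simp only [Nat.cast_one]
  have step : ∀ p : {p : ℤ × ℤ // p ≠ 0},
      ((Real.sin ((1:ℝ) * latticeAngle p.1) : ℂ)) ^ (2*n) /
        (((p.1.1 : ℂ)) ^ 2 + ((p.1.2 : ℂ)) ^ 2) ^ s =
      ∑ l ∈ Finset.range (n+1), ((n.choose l : ℂ) * (-1)^l) *
        (((Real.cos ((1:ℝ) * latticeAngle p.1) : ℂ)) ^ (2*l) /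
          (((p.1.1 : ℂ)) ^ 2 + ((p.1.2 : ℂ)) ^ 2) ^ s) := by
    intro p
    rw [aux_sin_pow, Finset.sum_div]
    exact Finset.sum_congr rfl fun l _ => by rw [mul_div_assoc]
  rw [tsum_congr step, Summable.tsum_finsetSum (fun l _ => Summable.mul_left _ (aux_summable l hs))]
  refine Finset.sum_congr rfl fun l _ => ?_
  rw [tsum_mul_left, latC]
  simp only [Nat.cast_one]

/-- Binomial recurrence for the sums `𝒞(2n,1;s)` for `Re s > 1`, together with its
consequences: an identity for even `n = 2k` and an expression for `𝒞(4k-2,1;s)`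
in terms of lower order sums for odd `n = 2k-1`. -/
theorem latC_binomial_recurrence (s : ℂ) (hs : 1 < s.re) :
    (∀ n : ℕ, latC (2 * n) 1 s =
      ∑ l ∈ Finset.range (n + 1), (n.choose l : ℂ) * (-1) ^ l * latC (2 * l) 1 s) ∧
    (∀ k : ℕ, ∑ l ∈ Finset.range (2 * k),
      ((2 * k).choose l : ℂ) * (-1) ^ l * latC (2 * l) 1 s = 0) ∧
    (∀ k : ℕ, 1 ≤ k → latC (4 * k - 2) 1 s =
      (1 / 2) * ∑ l ∈ Finset.range (2 * k - 1),
        ((2 * k - 1).choose l : ℂ) * (-1) ^ l * latC (2 * l) 1 s) := by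
  refine ⟨latC_rec s hs, ?_, ?_⟩
  · intro k
    have h := latC_rec s hs (2 * k)
    rw [Finset.sum_range_succ] at h
    have hpow : ((-1 : ℂ)) ^ (2 * k) = 1 := by
      rw [pow_mul]; norm_num
    simp [hpow, Nat.choose_self] at h
    linear_combination h
  · intro k hk
    have h := latC_rec s hs (2 * k - 1)
    rw [Finset.sum_range_succ] at h
    have hpow : ((-1 : ℂ)) ^ (2 * k - 1) = -1 :=
      Odd.neg_one_pow ⟨k - 1, by omega⟩
    have h42 : 2 * (2 * k - 1) = 4 * k - 2 := by omega
    rw [h42, hpow, Nat.choose_self] at h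
    push_cast at h
    linear_combination (1/2 : ℂ) * h
end
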